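/- Let γ_k = γ_0/(k+1)^a and λ_k = λ_0/(k+1)^b with γ_0, λ_0 > 0, a, b > 0, a > b, a + b < 1 and 3a + b < 2. Then: (i) there exist B_1 > 0 and an integer k_1 such that (1/(γ_k³ λ_k))(λ_{k-1}/λ_k - 1)² ≤ B_1 for all k ≥ k_1; (ii) for any constants μ_h, L_ω > 0 there exist ρ ∈ (0,1) and an integer k_2 such that γ_{k-1}/λ_{k-1} ≤ (γ_k/λ_k)(1 + ρ (μ_h/(2L_ω)) γ_k λ_k) for all k ≥ k_2; (iii) lim_{k→∞} γ_k/λ_k = 0. -/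

import Mathlib

open Filter Topology Real

lemma aux_ratio_bound (x p : ℝ) (hx : 0 < x) (hp0 : 0 ≤ p) (hp1 : p ≤ 1) :
    ((x + 1) / x) ^ p ≤ 1 + p / x := by
  have h1 : (x + 1) / x = 1 + 1 / x := by field_simp
  have hs : (0:ℝ) ≤ 1 / x := by positivity
  have hs2 : (-1:ℝ) ≤ 1 / x := le_trans (by norm_num) hs
  have h2 := rpow_one_add_le_one_add_mul_self hs2 hp0 hp1
  rw [h1]
  calc (1 + 1 / x) ^ p ≤ 1 + p * (1 / x) := h2
    _ = 1 + p / x := by rw [mul_one_div]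

/-- With γ_k = γ0/(k+1)^a and λ_k = lam0/(k+1)^b, a,b>0, a>b, a+b<1, 3a+b<2, the
sequences satisfy Assumption 4 of the paper. -/
theorem stepsize_sequences_assumption4 (γ0 lam0 a b : ℝ) (γ lam : ℕ → ℝ)
    (hγ0 : 0 < γ0) (hlam0 : 0 < lam0)
    (hγ : ∀ k : ℕ, γ k = γ0 / ((k : ℝ) + 1) ^ a)
    (hlam : ∀ k : ℕ, lam k = lam0 / ((k : ℝ) + 1) ^ b)
    (ha : 0 < a) (hb : 0 < b) (hba : b < a)
    (hab : a + b < 1) (h3ab : 3 * a + b < 2) :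
    (∃ B1 : ℝ, 0 < B1 ∧ ∃ k1 : ℕ, ∀ k ≥ k1,
      1 / (γ (k + 1) ^ 3 * lam (k + 1)) * (lam k / lam (k + 1) - 1) ^ 2 ≤ B1) ∧
    (∀ μh Lω : ℝ, 0 < μh → 0 < Lω →
      ∃ ρ : ℝ, 0 < ρ ∧ ρ < 1 ∧ ∃ k2 : ℕ, ∀ k ≥ k2,
        γ k / lam k ≤
          γ (k + 1) / lam (k + 1) *
            (1 + ρ * (μh / (2 * Lω)) * γ (k + 1) * lam (k + 1))) ∧
    Tendsto (fun k => γ k / lam k) atTop (𝓝 0) := by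
  have ha1 : a < 1 := by linarith
  have hb1 : b < 1 := by linarith
  have key : ∀ k : ℕ, γ k / lam k = (γ0 / lam0) * ((((k : ℝ) + 1) ^ (a - b))⁻¹) := by
    intro k
    have hx : (0:ℝ) < (k : ℝ) + 1 := by positivity
    rw [hγ k, hlam k, div_div_div_comm, ← rpow_sub hx, div_eq_mul_inv]
  have hxpos : ∀ k : ℕ, (0:ℝ) < (k : ℝ) + 1 := fun k => by positivity
  have hx1 : ∀ k : ℕ, (1:ℝ) ≤ (k : ℝ) + 1 := fun k => by
    have : (0:ℝ) ≤ (k:ℝ) := Nat.cast_nonneg k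
    linarith
  refine ⟨⟨4 * b ^ 2 / (γ0 ^ 3 * lam0), by positivity, 0, ?_⟩, ?_, ?_⟩
  · -- Part (i)
    intro k _
    rw [hγ (k+1), hlam (k+1), hlam k]
    push_cast
    set x : ℝ := (k : ℝ) + 1 with hxdef
    have hx : 0 < x := hxpos k
    have hy : 0 < x + 1 := by linarith
    have e1 : (γ0 / (x + 1) ^ a) ^ 3 = γ0 ^ 3 / (x + 1) ^ (3 * a) := by
      rw [div_pow, show ((x+1) ^ a) ^ 3 = (x+1) ^ (3*a) by
        rw [← rpow_natCast ((x+1)^a) 3, ← rpow_mul hy.le]; norm_num; ring_nf]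
    have e2 : 1 / (γ0 ^ 3 / (x + 1) ^ (3 * a) * (lam0 / (x + 1) ^ b))
        = (x + 1) ^ (3 * a + b) / (γ0 ^ 3 * lam0) := by
      rw [rpow_add hy]
      have h1 : ((x+1):ℝ) ^ (3*a) ≠ 0 := by positivity
      have h2 : ((x+1):ℝ) ^ b ≠ 0 := by positivity
      field_simp
    have e3 : lam0 / x ^ b / (lam0 / (x + 1) ^ b) = ((x + 1) / x) ^ b := by
      rw [div_rpow hy.le hx.le]
      have h1 : (x:ℝ) ^ b ≠ 0 := by positivity
      have h2 : ((x+1):ℝ) ^ b ≠ 0 := by positivity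
      field_simp
    rw [e1, e2, e3]
    have hD0 : (0:ℝ) ≤ ((x + 1) / x) ^ b - 1 := by
      have h1 : (1:ℝ) ≤ (x + 1) / x := by
        rw [le_div_iff₀ hx]; linarith
      have := rpow_le_rpow (le_of_lt one_pos) h1 hb.le
      rw [one_rpow] at this
      linarith
    have hD : ((x + 1) / x) ^ b - 1 ≤ b / x := by
      have := aux_ratio_bound x b hx hb.le hb1.le
      linarith
    have hD2 : (((x + 1) / x) ^ b - 1) ^ 2 ≤ (b / x) ^ 2 := by
      apply pow_le_pow_left₀ hD0 hD
    have hy2 : (x + 1) ^ (3 * a + b) ≤ 4 * x ^ (3 * a + b) := by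
      have h2x : x + 1 ≤ 2 * x := by linarith
      calc (x + 1) ^ (3 * a + b) ≤ (2 * x) ^ (3 * a + b) :=
            rpow_le_rpow hy.le h2x (by positivity)
        _ = 2 ^ (3 * a + b) * x ^ (3 * a + b) := mul_rpow (by norm_num) hx.le
        _ ≤ 4 * x ^ (3 * a + b) := by
            have h4 : (2:ℝ) ^ (3 * a + b) ≤ 4 := by
              have := rpow_le_rpow_of_exponent_le (x := (2:ℝ)) one_le_two h3ab.le
              rwa [show ((2:ℝ):ℝ) ^ (2:ℝ) = 4 by
                rw [show (2:ℝ) = ((2:ℕ):ℝ) by norm_num, rpow_natCast]; norm_num] at this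
            have : (0:ℝ) ≤ x ^ (3 * a + b) := by positivity
            nlinarith
    have hxle1 : x ^ (3 * a + b) * (x ^ 2)⁻¹ ≤ 1 := by
      have : x ^ (3 * a + b) * (x ^ 2)⁻¹ = x ^ (3 * a + b - 2) := by
        rw [rpow_sub hx, div_eq_mul_inv, ← rpow_natCast x 2]
        norm_num
      rw [this]
      exact rpow_le_one_of_one_le_of_nonpos (hx1 k) (by linarith)
    calc (x + 1) ^ (3 * a + b) / (γ0 ^ 3 * lam0) * (((x + 1) / x) ^ b - 1) ^ 2
        ≤ 4 * x ^ (3 * a + b) / (γ0 ^ 3 * lam0) * ((b / x) ^ 2) := by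
          apply mul_le_mul (by gcongr) hD2 (by positivity) (by positivity)
      _ = 4 * b ^ 2 / (γ0 ^ 3 * lam0) * (x ^ (3 * a + b) * (x ^ 2)⁻¹) := by
          field_simp
      _ ≤ 4 * b ^ 2 / (γ0 ^ 3 * lam0) * 1 := by gcongr <;> positivity
      _ = 4 * b ^ 2 / (γ0 ^ 3 * lam0) := mul_one _
  · -- Part (ii)
    intro μh Lω hμ hL
    set c : ℝ := μh / (2 * Lω) with hcdef
    have hc : 0 < c := by positivity
    set C : ℝ := 1 / 2 * c * (γ0 * lam0) with hCdef
    have hC : 0 < C := by positivity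
    clear_value C
    clear_value c
    refine ⟨1/2, by norm_num, by norm_num, ?_⟩
    have htend : Tendsto (fun k : ℕ => ((k:ℝ) + 1) ^ (1 - a - b)) atTop atTop :=
      (tendsto_rpow_atTop (by linarith)).comp
        (tendsto_atTop_add_const_right atTop 1 tendsto_natCast_atTop_atTop)
    obtain ⟨k2, hk2⟩ := (htend.eventually_ge_atTop (2 * (a - b) / C)).exists_forall_of_atTop
    refine ⟨k2, fun k hk => ?_⟩
    have hk2' := hk2 k hk
    rw [key k, key (k+1), hγ (k+1), hlam (k+1)]
    push_cast
    push_cast at hk2'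
    set x : ℝ := (k : ℝ) + 1 with hxdef
    have hxg1 : 1 ≤ x := hx1 k
    clear_value x
    have hx : 0 < x := by linarith
    have hy : 0 < x + 1 := by linarith
    have hyab : (0:ℝ) < (x + 1) ^ (a + b) := by positivity
    have e : (1:ℝ)/2 * c * (γ0 / (x + 1) ^ a) * (lam0 / (x + 1) ^ b)
        = C * ((x + 1) ^ (a + b))⁻¹ := by
      rw [hCdef, rpow_add hy]
      have h1 : ((x+1):ℝ) ^ a ≠ 0 := by positivity
      have h2 : ((x+1):ℝ) ^ b ≠ 0 := by positivity
      have h3 : Lω ≠ 0 := ne_of_gt hL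
      field_simp
    rw [e]
    have h1 : ((x + 1) / x) ^ (a - b) ≤ 1 + (a - b) / x :=
      aux_ratio_bound x (a - b) hx (by linarith) (by linarith)
    have h2 : (a - b) / x ≤ C * ((x + 1) ^ (a + b))⁻¹ := by
      rw [← div_eq_mul_inv, div_le_div_iff₀ hx hyab]
      have hstep : 2 * (a - b) ≤ C * x ^ (1 - a - b) := by
        rw [div_le_iff₀ hC] at hk2'
        linarith
      have hyb : (x + 1) ^ (a + b) ≤ 2 * x ^ (a + b) := by
        have h2x : x + 1 ≤ 2 * x := by linarith
        calc (x + 1) ^ (a + b) ≤ (2 * x) ^ (a + b) :=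
              rpow_le_rpow hy.le h2x (by positivity)
          _ = 2 ^ (a + b) * x ^ (a + b) := mul_rpow (by norm_num) hx.le
          _ ≤ 2 * x ^ (a + b) := by
              have h4 : (2:ℝ) ^ (a + b) ≤ 2 := by
                have := rpow_le_rpow_of_exponent_le (x := (2:ℝ)) one_le_two hab.le
                rwa [rpow_one] at this
              have : (0:ℝ) ≤ x ^ (a + b) := by positivity
              nlinarith
      calc (a - b) * (x + 1) ^ (a + b) ≤ (a - b) * (2 * x ^ (a + b)) :=
            mul_le_mul_of_nonneg_left hyb (by linarith)
        _ = 2 * (a - b) * x ^ (a + b) := by ring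
        _ ≤ C * x ^ (1 - a - b) * x ^ (a + b) :=
            mul_le_mul_of_nonneg_right hstep (by positivity)
        _ = C * x := by rw [mul_assoc, ← rpow_add hx]; norm_num
    have h3 : ((x + 1) / x) ^ (a - b) ≤ 1 + C * ((x + 1) ^ (a + b))⁻¹ := by linarith
    have h4 : (x + 1) ^ (a - b) / x ^ (a - b) ≤ 1 + C * ((x + 1) ^ (a + b))⁻¹ := by
      rw [← div_rpow hy.le hx.le]; exact h3
    have hxab : (0:ℝ) < x ^ (a - b) := by positivity
    have hyabpos : (0:ℝ) < (x + 1) ^ (a - b) := by positivity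
    have h5 : (x ^ (a - b))⁻¹ ≤ ((x + 1) ^ (a - b))⁻¹ * (1 + C * ((x + 1) ^ (a + b))⁻¹) := by
      calc (x ^ (a - b))⁻¹
          = ((x + 1) ^ (a - b))⁻¹ * ((x + 1) ^ (a - b) / x ^ (a - b)) := by
            field_simp
        _ ≤ ((x + 1) ^ (a - b))⁻¹ * (1 + C * ((x + 1) ^ (a + b))⁻¹) := by
            gcongr
    calc γ0 / lam0 * (x ^ (a - b))⁻¹
        ≤ γ0 / lam0 * (((x + 1) ^ (a - b))⁻¹ * (1 + C * ((x + 1) ^ (a + b))⁻¹)) := by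
          have : (0:ℝ) ≤ γ0 / lam0 := by positivity
          exact mul_le_mul_of_nonneg_left h5 this
      _ = γ0 / lam0 * ((x + 1) ^ (a - b))⁻¹ * (1 + C * ((x + 1) ^ (a + b))⁻¹) := by ring
  · -- Part (iii)
    have heq : (fun k : ℕ => γ k / lam k)
        = fun k : ℕ => (γ0 / lam0) * ((((k : ℝ) + 1) ^ (a - b))⁻¹) := funext key
    rw [heq]
    have h : Tendsto (fun k : ℕ => ((k:ℝ) + 1) ^ (a - b)) atTop atTop :=
      (tendsto_rpow_atTop (by linarith)).comp
        (tendsto_atTop_add_const_right atTop 1 tendsto_natCast_atTop_atTop)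
    have h2 := h.inv_tendsto_atTop
    have h3 := h2.const_mul (γ0 / lam0)
    simpa only [mul_zero, Pi.inv_apply] using h3
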